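/- Let M be a matching in a bipartite instance H with strict preferences admitting a witness α (Σ α_u = 0, α_a + α_b ≥ wt_M(a,b) for all edges, α_u ≥ wt_M(u,u) for all vertices). If (a,b) is an edge contained in some popular matching of H, then α_a + α_b = wt_M(a,b). -/
import Mathlib


open Finset

section Defs
variable {V : Type*}

/-- A matching given as a partial partner function: if `M u = some v` then
`(u,v)` is an edge and `v`'s partner is `u`. -/
def IsMatching (adj : V → V → Prop) (M : V → Option V) : Prop :=
  ∀ u v, M u = some v → adj u v ∧ M v = some u

/-- Vertex `u` prefers matching `M` to `M'`: matched in `M` and unmatched in `M'`,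
or matched in both and prefers its `M`-partner. -/
def PrefersM (pref : V → V → V → Bool) (M M' : V → Option V) (u : V) : Bool :=
  match M u, M' u with
  | some a, some b => pref u a b
  | some _, none => true
  | _, _ => false

/-- `phiM pref M M'` = number of vertices preferring `M` to `M'`. -/
def phiM [Fintype V] (pref : V → V → V → Bool) (M M' : V → Option V) : ℕ :=
  (Finset.univ.filter fun u => PrefersM pref M M' u = true).card

/-- `M` is popular: no matching is preferred by strictly more vertices. -/
def Popular [Fintype V] (adj : V → V → Prop) (pref : V → V → V → Bool)
    (M : V → Option V) : Prop :=
  ∀ M', IsMatching adj M' → phiM pref M' M ≤ phiM pref M M'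

/-- `a` prefers `b` to its assignment under `M` (being unmatched is worst). -/
def PrefOver (pref : V → V → V → Bool) (M : V → Option V) (a b : V) : Prop :=
  match M a with
  | none => True
  | some c => pref a b c = true

/-- `(a,b)` is a blocking edge with respect to `M`. -/
def Blocking (adj : V → V → Prop) (pref : V → V → V → Bool) (M : V → Option V)
    (a b : V) : Prop :=
  adj a b ∧ PrefOver pref M a b ∧ PrefOver pref M b a

/-- Number of matched vertices (twice the number of edges of `M`). -/
def msize [Fintype V] (M : V → Option V) : ℕ :=
  (Finset.univ.filter fun u => (M u).isSome = true).card

/-- `vote u v v'` where `u` itself encodes "unmatched"; every vertex regards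
itself as strictly worse than any neighbor. -/
def vote [DecidableEq V] (pref : V → V → V → Bool) (u v v' : V) : ℤ :=
  if v = v' then 0
  else if v' = u then 1
  else if v = u then -1
  else if pref u v v' then 1 else -1

/-- `wt_M(a,b) = vote_a(b, M̃(a)) + vote_b(a, M̃(b))`. -/
def wtEdge [DecidableEq V] (pref : V → V → V → Bool) (M : V → Option V) (a b : V) : ℤ :=
  vote pref a b ((M a).getD a) + vote pref b a ((M b).getD b)

/-- `wt_M(u,u)`: 0 if `u` is unmatched in `M`, else −1. -/
def wtSelf (M : V → Option V) (u : V) : ℤ :=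
  if (M u).isSome then -1 else 0

end Defs

/-- If `M` admits a witness `α` and the edge `(a,b)` belongs to some popular
matching of the bipartite instance `H`, then `α_a + α_b = wt_M(a,b)`. -/
theorem popular_edge_tight {V : Type*} [Fintype V] [DecidableEq V]
    (adj : V → V → Prop) (hsymm : ∀ u v, adj u v → adj v u) (hadjirr : ∀ u, ¬ adj u u)
    (side : V → Bool) (hbip : ∀ u v, adj u v → side u ≠ side v)
    (pref : V → V → V → Bool)
    (hpirr : ∀ u a, pref u a a = false)
    (hasym : ∀ u a b, pref u a b = true → pref u b a = false)
    (htrans : ∀ u a b c, pref u a b = true → pref u b c = true → pref u a c = true)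
    (htot : ∀ u a b, adj u a → adj u b → a ≠ b → pref u a b = true ∨ pref u b a = true)
    (M : V → Option V) (hM : IsMatching adj M)
    (α : V → ℝ) (hsum : ∑ u : V, α u = 0)
    (hedge : ∀ a b, adj a b → α a + α b ≥ ((wtEdge pref M a b : ℤ) : ℝ))
    (hself : ∀ u, α u ≥ ((wtSelf M u : ℤ) : ℝ))
    (a b : V) (hab : adj a b)
    (hpopedge : ∃ N, IsMatching adj N ∧ Popular adj pref N ∧ N a = some b) :
    α a + α b = ((wtEdge pref M a b : ℤ) : ℝ) := by
  classical
  obtain ⟨N, hN, hNpop, hNab⟩ := hpopedge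
  have hNba : N b = some a := (hN a b hNab).2
  have hne : ∀ u v, adj u v → v ≠ u := fun u v h hvu => hadjirr u (hvu ▸ h)
  set F : V → ℝ := fun u => ((vote pref u ((N u).getD u) ((M u).getD u) : ℤ) : ℝ) with hFdef
  have hFP : ∀ u, F u = (if PrefersM pref N M u then (1:ℝ) else 0)
      - (if PrefersM pref M N u then (1:ℝ) else 0) := by
    intro u
    simp only [hFdef]
    cases hNu : N u with
    | none =>
      cases hMu : M u with
      | none => simp [vote, PrefersM, hNu, hMu]
      | some y =>
        have hy : y ≠ u := hne u y (hM u y hMu).1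
        simp [vote, PrefersM, hNu, hMu, hy, Ne.symm hy]
    | some x =>
      have hx : x ≠ u := hne u x (hN u x hNu).1
      cases hMu : M u with
      | none => simp [vote, PrefersM, hNu, hMu, hx]
      | some y =>
        have hy : y ≠ u := hne u y (hM u y hMu).1
        by_cases hxy : x = y
        · subst hxy; simp [vote, PrefersM, hNu, hMu, hpirr]
        · rcases htot u x y (hN u x hNu).1 (hM u y hMu).1 hxy with h | h
          · simp [vote, PrefersM, hNu, hMu, hxy, hx, hy, h, hasym u x y h]
          · simp [vote, PrefersM, hNu, hMu, hxy, hx, hy, hasym u y x h, h,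
              Ne.symm hxy]
  have hsumF : ∑ u, F u = ((phiM pref N M : ℕ) : ℝ) - ((phiM pref M N : ℕ) : ℝ) := by
    simp only [hFP, Finset.sum_sub_distrib, Finset.sum_boole, phiM]
  have hΔ : (0:ℝ) ≤ ∑ u, F u := by
    rw [hsumF]
    have := hNpop M hM
    have : ((phiM pref M N : ℕ) : ℝ) ≤ ((phiM pref N M : ℕ) : ℝ) := by exact_mod_cast this
    linarith
  set Hh : V → ℝ := fun u => α u - F u with hHdef
  have hpair : ∀ u, 0 ≤ Hh u + Hh ((N u).getD u) := by
    intro u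
    cases hNu : N u with
    | none =>
      have hFu : F u ≤ α u := by
        simp only [hFdef, hNu, Option.getD_none]
        cases hMu : M u with
        | none =>
          have := hself u
          simp only [wtSelf, hMu] at this
          simpa [vote] using this
        | some c =>
          have hc : c ≠ u := hne u c (hM u c hMu).1
          have := hself u
          simp only [wtSelf, hMu] at this
          simp only [hMu, Option.getD_some]
          simp only [vote, if_neg (Ne.symm hc), if_neg hc, if_pos rfl]
          simpa using this
      simp only [hHdef, hNu, Option.getD_none]
      linarith
    | some v =>
      have hNvu : N v = some u := (hN u v hNu).2
      have hadjuv : adj u v := (hN u v hNu).1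
      have hwt : F u + F v = ((wtEdge pref M u v : ℤ) : ℝ) := by
        simp only [hFdef, hNu, hNvu, Option.getD_some, wtEdge]
        push_cast
        ring
      have := hedge u v hadjuv
      simp only [hHdef, hNu, Option.getD_some]
      linarith
  have hcomp : ∑ u, Hh ((N u).getD u) = ∑ u, Hh u := by
    have hinv : Function.Involutive (fun u => (N u).getD u) := by
      intro u
      cases hNu : N u with
      | none => simp [hNu]
      | some v => simp [hNu, (hN u v hNu).2]
    exact hinv.bijective.sum_comp _
  have hsumH : ∑ u, Hh u = - ∑ u, F u := by
    simp only [hHdef, Finset.sum_sub_distrib, hsum]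
    ring
  have hS0 : ∑ u, (Hh u + Hh ((N u).getD u)) = 0 := by
    have h1 : ∑ u, (Hh u + Hh ((N u).getD u)) = 2 * ∑ u, Hh u := by
      rw [Finset.sum_add_distrib, hcomp]; ring
    have h2 : (0:ℝ) ≤ ∑ u, (Hh u + Hh ((N u).getD u)) :=
      Finset.sum_nonneg fun u _ => hpair u
    rw [h1, hsumH] at h2 ⊢
    linarith
  have hz := (Finset.sum_eq_zero_iff_of_nonneg fun u _ => hpair u).1 hS0 a (Finset.mem_univ a)
  rw [hNab, Option.getD_some] at hz
  have hFab : F a + F b = ((wtEdge pref M a b : ℤ) : ℝ) := by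
    simp only [hFdef, hNab, hNba, Option.getD_some, wtEdge]
    push_cast
    ring
  simp only [hHdef] at hz
  linarith
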